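/- Let D be the unique ℚ-linear derivation of ℚ[x,y] satisfying D(x) = xy and D(y) = x, and work in the formal power series ring ℚ[x,y][[t]]. Put G = Σ_{n≥0} D^n(y) tⁿ/n!, C = Σ_{m≥0} (-1)^m (2x-y²)^m t^{2m}/(2m)!, and S = Σ_{m≥0} (-1)^m (2x-y²)^m t^{2m+1}/(2m+1)!. Then G · ((x-y²)S + yC) = x + y(2x-y²)S − (x-y²)C. (This is the Foata–Schützenberger generating function identity for the André polynomials E_n(x,y) = D^n(y), written with denominators cleared and the common factor √(2x-y²) cancelled.) -/

import Mathlib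

open MvPolynomial

/-- The generating function `G = ∑_{n≥0} Dⁿ(y) tⁿ/n!` of the André polynomials
`E_n(x,y) = Dⁿ(y)`, as a formal power series over `ℚ[x,y]`. -/
noncomputable def andreGen
    (D : Derivation ℚ (MvPolynomial (Fin 2) ℚ) (MvPolynomial (Fin 2) ℚ)) :
    PowerSeries (MvPolynomial (Fin 2) ℚ) :=
  PowerSeries.mk fun n => ((n.factorial : ℚ)⁻¹) • ((⇑D)^[n] (X 1))

/-- `C = ∑_{m≥0} (-1)^m (2x - y²)^m t^{2m}/(2m)!`. -/
noncomputable def cosSeries : PowerSeries (MvPolynomial (Fin 2) ℚ) :=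
  PowerSeries.mk fun j =>
    if Even j then ((-1 : ℚ) ^ (j / 2) * (j.factorial : ℚ)⁻¹) •
      ((2 * X 0 - X 1 ^ 2 : MvPolynomial (Fin 2) ℚ) ^ (j / 2))
    else 0

/-- `S = ∑_{m≥0} (-1)^m (2x - y²)^m t^{2m+1}/(2m+1)!`. -/
noncomputable def sinSeries : PowerSeries (MvPolynomial (Fin 2) ℚ) :=
  PowerSeries.mk fun j =>
    if Even j then 0
    else ((-1 : ℚ) ^ (j / 2) * (j.factorial : ℚ)⁻¹) •
      ((2 * X 0 - X 1 ^ 2 : MvPolynomial (Fin 2) ℚ) ^ (j / 2))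

abbrev R2 : Type := MvPolynomial (Fin 2) ℚ

/-- Coefficientwise application of the derivation `D` to a power series. -/
noncomputable def Dhat (D : Derivation ℚ R2 R2) : PowerSeries R2 → PowerSeries R2 :=
  fun f => PowerSeries.mk fun n => D (PowerSeries.coeff n f)

@[simp] lemma coeff_Dhat (D : Derivation ℚ R2 R2) (f : PowerSeries R2) (n : ℕ) :
    PowerSeries.coeff n (Dhat D f) = D (PowerSeries.coeff n f) := by
  simp [Dhat]

lemma Dhat_add (D : Derivation ℚ R2 R2) (f g : PowerSeries R2) :
    Dhat D (f + g) = Dhat D f + Dhat D g := by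
  apply PowerSeries.ext; intro n; simp

lemma Dhat_sub (D : Derivation ℚ R2 R2) (f g : PowerSeries R2) :
    Dhat D (f - g) = Dhat D f - Dhat D g := by
  apply PowerSeries.ext; intro n; simp

lemma Dhat_mul (D : Derivation ℚ R2 R2) (f g : PowerSeries R2) :
    Dhat D (f * g) = Dhat D f * g + f * Dhat D g := by
  apply PowerSeries.ext; intro n
  simp only [coeff_Dhat, map_add, PowerSeries.coeff_mul, map_sum, Derivation.leibniz,
    smul_eq_mul]
  rw [← Finset.sum_add_distrib]
  apply Finset.sum_congr rfl
  intro p _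
  ring

lemma Dhat_C (D : Derivation ℚ R2 R2) (c : R2) :
    Dhat D (PowerSeries.C c) = PowerSeries.C (D c) := by
  apply PowerSeries.ext; intro n
  rcases n with _ | n <;> simp [PowerSeries.coeff_C]

lemma cast_mul_smul (p : R2) (m : ℕ) : p * ((m : R2) + 1) = ((m : ℚ) + 1) • p := by
  rw [mul_comm, Algebra.smul_def, map_add, map_natCast, map_one]

lemma fact_succ_inv (n : ℕ) :
    (((n+1).factorial : ℚ))⁻¹ * ((n : ℚ) + 1) = ((n.factorial : ℚ))⁻¹ := by
  rw [Nat.factorial_succ]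
  push_cast
  rw [mul_inv]
  field_simp

lemma dS : PowerSeries.derivative R2 sinSeries = cosSeries := by
  apply PowerSeries.ext; intro n
  rw [PowerSeries.coeff_derivative]
  rcases Nat.even_or_odd n with he | ho
  · have h1 : ¬ Even (n+1) := by simp [Nat.even_add_one, he]
    obtain ⟨k, hk⟩ := he
    subst hk
    have e1 : (k + k + 1) / 2 = k := by omega
    have e2 : (k + k) / 2 = k := by omega
    simp only [sinSeries, cosSeries, PowerSeries.coeff_mk, if_neg h1,
      if_pos (Even.add_self k), e1, e2]
    rw [smul_mul_assoc, cast_mul_smul, smul_smul, mul_assoc, fact_succ_inv]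
  · obtain ⟨k, hk⟩ := ho
    subst hk
    have h1 : Even (2*k+1+1) := by rw [Nat.even_iff]; omega
    have h2 : ¬ Even (2*k+1) := by rw [Nat.even_iff]; omega
    simp [sinSeries, cosSeries, PowerSeries.coeff_mk, if_pos h1, if_neg h2]

lemma dC : PowerSeries.derivative R2 cosSeries =
    PowerSeries.C (-(2 * X 0 - X 1 ^ 2)) * sinSeries := by
  apply PowerSeries.ext; intro n
  rw [PowerSeries.coeff_derivative, PowerSeries.coeff_C_mul]
  rcases Nat.even_or_odd n with he | ho
  · have h1 : ¬ Even (n+1) := by simp [Nat.even_add_one, he]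
    simp [sinSeries, cosSeries, PowerSeries.coeff_mk, if_neg h1, if_pos he]
  · obtain ⟨k, hk⟩ := ho
    subst hk
    have h1 : Even (2*k+1+1) := by rw [Nat.even_iff]; omega
    have h2 : ¬ Even (2*k+1) := by rw [Nat.even_iff]; omega
    have e1 : (2*k+1+1) / 2 = k+1 := by omega
    have e2 : (2*k+1) / 2 = k := by omega
    simp only [sinSeries, cosSeries, PowerSeries.coeff_mk, if_pos h1, if_neg h2, e1, e2]
    rw [smul_mul_assoc, cast_mul_smul, smul_smul, mul_assoc, fact_succ_inv,
      mul_smul_comm, neg_mul, ← pow_succ', smul_neg, ← neg_smul]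
    congr 1
    ring

lemma dG (D : Derivation ℚ R2 R2) :
    PowerSeries.derivative R2 (andreGen D) = Dhat D (andreGen D) := by
  apply PowerSeries.ext; intro n
  rw [PowerSeries.coeff_derivative]
  simp only [andreGen, PowerSeries.coeff_mk, coeff_Dhat]
  rw [smul_mul_assoc, cast_mul_smul, smul_smul, fact_succ_inv,
    Derivation.map_smul, Function.iterate_succ_apply']

section
variable (D : Derivation ℚ R2 R2) (hx : D (X 0) = X 0 * X 1) (hy : D (X 1) = X 0)

include hx hy in
lemma hA : D (2 * X 0 - X 1 ^ 2 : R2) = 0 := by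
  rw [map_sub, two_mul, map_add, hx, pow_two, Derivation.leibniz, hy]
  simp only [smul_eq_mul]
  ring

include hx hy in
lemma hApow (m : ℕ) : D ((2 * X 0 - X 1 ^ 2 : R2) ^ m) = 0 := by
  induction m with
  | zero => simp [D.map_one_eq_zero]
  | succ m ih =>
    rw [pow_succ, Derivation.leibniz, hA D hx hy, ih]
    simp

include hx hy in
lemma DhatC : Dhat D cosSeries = 0 := by
  apply PowerSeries.ext; intro n
  simp only [coeff_Dhat, cosSeries, PowerSeries.coeff_mk, map_zero]
  split
  · rw [Derivation.map_smul, hApow D hx hy]; simp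
  · simp

include hx hy in
lemma DhatS : Dhat D sinSeries = 0 := by
  apply PowerSeries.ext; intro n
  simp only [coeff_Dhat, sinSeries, PowerSeries.coeff_mk, map_zero]
  split
  · simp
  · rw [Derivation.map_smul, hApow D hx hy]; simp

end

lemma ode_zero (D : Derivation ℚ R2 R2) (F : PowerSeries R2)
    (h0 : PowerSeries.coeff 0 F = 0)
    (hODE : PowerSeries.derivative R2 F = Dhat D F - PowerSeries.C (X 1) * F) :
    F = 0 := by
  suffices h : ∀ n, PowerSeries.coeff n F = 0 by
    apply PowerSeries.ext; intro n; simp [h n]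
  intro n
  induction n with
  | zero => exact h0
  | succ n ih =>
    have h1 := congrArg (PowerSeries.coeff n) hODE
    rw [PowerSeries.coeff_derivative, map_sub, coeff_Dhat, PowerSeries.coeff_C_mul,
      ih, map_zero, mul_zero, sub_zero] at h1
    rcases mul_eq_zero.mp h1 with h | h
    · exact h
    · exfalso
      have hne : ((n : R2) + 1) ≠ 0 := by
        have := (Nat.cast_ne_zero (R := R2)).mpr (Nat.succ_ne_zero n)
        push_cast at this
        exact this
      exact hne h

/-- Foata–Schützenberger: `G · ((x-y²)S + yC) = x + y(2x-y²)S − (x-y²)C`. -/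
theorem stmt9
    (D : Derivation ℚ (MvPolynomial (Fin 2) ℚ) (MvPolynomial (Fin 2) ℚ))
    (hx : D (X 0) = X 0 * X 1) (hy : D (X 1) = X 0) :
    andreGen D *
        (PowerSeries.C (R := MvPolynomial (Fin 2) ℚ) (X 0 - X 1 ^ 2) * sinSeries +
         PowerSeries.C (R := MvPolynomial (Fin 2) ℚ) (X 1) * cosSeries) =
      PowerSeries.C (R := MvPolynomial (Fin 2) ℚ) (X 0) +
        PowerSeries.C (R := MvPolynomial (Fin 2) ℚ) (X 1 * (2 * X 0 - X 1 ^ 2)) * sinSeries -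
        PowerSeries.C (R := MvPolynomial (Fin 2) ℚ) (X 0 - X 1 ^ 2) * cosSeries := by
  rw [← sub_eq_zero]
  apply ode_zero D
  · -- constant coefficient vanishes
    simp only [map_sub, map_add, map_mul, PowerSeries.coeff_zero_eq_constantCoeff,
      PowerSeries.constantCoeff_C, andreGen, sinSeries, cosSeries,
      PowerSeries.constantCoeff_mk]
    norm_num
    ring
  · -- the ODE
    have h2 : D (2 : R2) = 0 := by
      rw [show (2:R2) = (1:R2)+1 by norm_num, map_add, D.map_one_eq_zero, add_zero]
    have hsq : D (X 1 ^ 2 : R2) = 2 * (X 1 * X 0) := by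
      rw [pow_two, Derivation.leibniz, hy]
      simp only [smul_eq_mul]; ring
    simp only [map_sub, map_add, Derivation.leibniz, PowerSeries.derivative_C,
      Dhat_sub, Dhat_add, Dhat_mul, Dhat_C, dS, dC, dG, DhatS D hx hy, DhatC D hx hy,
      smul_eq_mul, hx, hy, hsq, h2, mul_zero, zero_mul, add_zero, zero_add, smul_zero]
    simp only [map_mul, map_sub, map_add, map_neg, map_pow, map_ofNat]
    ring
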